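/- For 0 ≤ r < 1 and 0 ≤ θ ≤ π, ∫_θ^{2π−θ} log|1 − r e^{it}| dt = 2 Im Li₂(r e^{iθ}). -/

import Mathlib

open Real Complex MeasureTheory intervalIntegral

lemma neg_log_series {w : ℂ} (hw : ‖w‖ < 1) :
    HasSum (fun n : ℕ => w ^ (n + 1) / (n + 1)) (-Complex.log (1 - w)) := by
  have h := Complex.hasSum_taylorSeries_neg_log hw
  rw [← hasSum_nat_add_iff' 1] at h
  simpa using h

lemma cos_integral (c : ℝ) (hc : c ≠ 0) (a b : ℝ) :
    ∫ t in a..b, Real.cos (c * t) = (Real.sin (c * b) - Real.sin (c * a)) / c := by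
  have key : ∀ t : ℝ, HasDerivAt (fun x => Real.sin (c * x) / c) (Real.cos (c * t)) t := by
    intro t
    have h1 : HasDerivAt (fun x : ℝ => c * x) c t := by
      simpa using (hasDerivAt_id t).const_mul c
    have h2 := (Real.hasDerivAt_sin (c * t)).comp t h1
    have := h2.div_const c
    simpa [mul_div_assoc, mul_comm, hc] using this
  rw [intervalIntegral.integral_eq_sub_of_hasDerivAt (fun t _ => key t)
    ((Real.continuous_cos.comp (continuous_const.mul continuous_id)).intervalIntegrable a b)]
  ring

/-- The principal dilogarithm `Li₂(z) = -∫₀¹ log(1 - t z)/t dt`. -/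
noncomputable def Li2 (z : ℂ) : ℂ :=
  -∫ t in (0:ℝ)..1, Complex.log (1 - (t : ℂ) * z) / (t : ℂ)

lemma li2_hasSum {z : ℂ} (hz : ‖z‖ < 1) :
    HasSum (fun n : ℕ => z ^ (n + 1) / ((n : ℂ) + 1) ^ 2) (Li2 z) := by
  set F : ℕ → ℝ → ℂ := fun n t => (t : ℂ) ^ n * (z ^ (n + 1) / ((n : ℂ) + 1)) with hF
  have hz0 : 0 ≤ ‖z‖ := norm_nonneg z
  -- rewrite Li2 as set integral of tsum
  have key : Li2 z = ∫ t in Set.Ioc (0:ℝ) 1, ∑' n, F n t := by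
    rw [Li2, ← intervalIntegral.integral_neg, intervalIntegral.integral_of_le zero_le_one]
    refine setIntegral_congr_fun measurableSet_Ioc (fun t ht => ?_)
    obtain ⟨ht0, ht1⟩ := ht
    have htne : (t : ℂ) ≠ 0 := by exact_mod_cast ht0.ne'
    have htz : ‖(t : ℂ) * z‖ < 1 := by
      rw [norm_mul, Complex.norm_real, Real.norm_of_nonneg ht0.le]
      calc t * ‖z‖ ≤ 1 * ‖z‖ := by nlinarith
        _ < 1 := by simpa
    have hs := (neg_log_series htz).div_const (t : ℂ)
    have heq : ∀ n : ℕ, ((t : ℂ) * z) ^ (n + 1) / ((n : ℂ) + 1) / (t : ℂ) = F n t := by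
      intro n
      rw [mul_pow, div_div, show ((t:ℂ))^(n+1) * z^(n+1) = (t:ℂ) * ((t:ℂ)^n * z^(n+1)) by ring,
        show ((n:ℂ)+1) * (t:ℂ) = (t:ℂ) * ((n:ℂ)+1) by ring,
        mul_div_mul_left _ _ htne, hF, mul_div_assoc]
    rw [← neg_div, ← hs.tsum_eq]
    exact tsum_congr heq
  -- integrability and summability for the swap
  have hFc : ∀ n, Continuous (F n) := by
    intro n; exact (Complex.continuous_ofReal.pow n).mul continuous_const
  have hint : ∀ n : ℕ, Integrable (F n) (volume.restrict (Set.Ioc (0:ℝ) 1)) :=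
    fun n => (hFc n).integrableOn_Ioc
  have hbound : ∀ n : ℕ, ∀ t ∈ Set.Ioc (0:ℝ) 1, ‖F n t‖ ≤ ‖z‖ ^ (n + 1) := by
    intro n t ht
    rw [hF]
    simp only [norm_mul, norm_div, norm_pow, Complex.norm_real]
    rw [Real.norm_of_nonneg ht.1.le]
    have h1 : t ^ n ≤ 1 := pow_le_one₀ ht.1.le ht.2
    have h2 : (1:ℝ) ≤ ‖((n : ℂ) + 1)‖ := by
      rw [show ((n:ℂ) + 1) = (((n:ℝ)+1 : ℝ) : ℂ) by push_cast; ring, Complex.norm_real,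
        Real.norm_of_nonneg (by positivity)]
      linarith [Nat.cast_nonneg (α := ℝ) n]
    calc t ^ n * (‖z‖ ^ (n+1) / ‖((n:ℂ)+1)‖)
        ≤ 1 * ‖z‖ ^ (n+1) :=
          mul_le_mul h1 (div_le_self (by positivity) h2) (by positivity) zero_le_one
      _ = ‖z‖ ^ (n + 1) := one_mul _
  have hsum : Summable fun n : ℕ => ∫ t, ‖F n t‖ ∂(volume.restrict (Set.Ioc (0:ℝ) 1)) := by
    have hle : ∀ n : ℕ, (∫ t, ‖F n t‖ ∂(volume.restrict (Set.Ioc (0:ℝ) 1))) ≤ ‖z‖ ^ (n+1) := by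
      intro n
      have := setIntegral_mono_on (hint n).norm
        (integrableOn_const measure_Ioc_lt_top.ne) measurableSet_Ioc (hbound n)
      simpa [Real.volume_Ioc] using this
    refine Summable.of_nonneg_of_le (fun n => integral_nonneg fun t => norm_nonneg _) hle ?_
    exact ((summable_geometric_of_lt_one hz0 hz).mul_left ‖z‖).congr fun n => by ring
  have hswap := MeasureTheory.hasSum_integral_of_summable_integral_norm hint hsum
  rw [← key] at hswap
  have hval : (fun n : ℕ => ∫ t, F n t ∂(volume.restrict (Set.Ioc (0:ℝ) 1)))
      = fun n : ℕ => z ^ (n + 1) / ((n : ℂ) + 1) ^ 2 := by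
    funext n
    have h1 : ∫ t, F n t ∂(volume.restrict (Set.Ioc (0:ℝ) 1))
        = (∫ t in Set.Ioc (0:ℝ) 1, (t : ℂ) ^ n) * (z ^ (n + 1) / ((n : ℂ) + 1)) := by
      rw [hF]; exact integral_mul_const _ _
    have h2 : (∫ t in Set.Ioc (0:ℝ) 1, (t : ℂ) ^ n) = ((1 / ((n:ℝ) + 1) : ℝ) : ℂ) := by
      rw [← intervalIntegral.integral_of_le zero_le_one]
      have : (fun t : ℝ => (t : ℂ) ^ n) = fun t : ℝ => ((t ^ n : ℝ) : ℂ) := by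
        funext t; push_cast; ring
      rw [this, intervalIntegral.integral_ofReal, integral_pow]
      norm_num
    rw [h1, h2]
    have hne : ((n : ℂ) + 1) ≠ 0 := by
      have := Nat.cast_add_one_ne_zero (R := ℂ) n
      push_cast at this ⊢
      exact this
    push_cast
    field_simp
  rwa [hval] at hswap

lemma pow_re_im (r t : ℝ) (n : ℕ) :
    (((r:ℂ) * Complex.exp ((t:ℂ) * Complex.I)) ^ (n+1)).re
        = r^(n+1) * Real.cos (((n:ℝ)+1)*t) ∧
    (((r:ℂ) * Complex.exp ((t:ℂ) * Complex.I)) ^ (n+1)).im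
        = r^(n+1) * Real.sin (((n:ℝ)+1)*t) := by
  rw [mul_pow, ← Complex.exp_nat_mul,
    show ((n+1:ℕ):ℂ) * ((t:ℂ) * Complex.I) = (((((n:ℝ)+1)*t : ℝ)):ℂ) * Complex.I by
      push_cast; ring,
    show ((r:ℂ))^(n+1) = ((r^(n+1) : ℝ):ℂ) by push_cast; ring]
  constructor
  · rw [Complex.re_ofReal_mul, Complex.exp_ofReal_mul_I_re]
  · rw [Complex.im_ofReal_mul, Complex.exp_ofReal_mul_I_im]

theorem integral_log_abs_eq_dilog (r θ : ℝ) (hr0 : 0 ≤ r) (hr1 : r < 1)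
    (hθ0 : 0 ≤ θ) (hθπ : θ ≤ Real.pi) :
    ∫ t in θ..(2 * Real.pi - θ),
        Real.log ‖1 - (r : ℂ) * Complex.exp ((t : ℂ) * Complex.I)‖
      = 2 * (Li2 ((r : ℂ) * Complex.exp ((θ : ℂ) * Complex.I))).im := by
  have hnorm : ∀ t : ℝ, ‖(r:ℂ) * Complex.exp ((t:ℂ) * Complex.I)‖ < 1 := by
    intro t
    rw [norm_mul, Complex.norm_real, Complex.norm_exp_ofReal_mul_I,
      Real.norm_of_nonneg hr0, mul_one]
    exact hr1
  have hle : θ ≤ 2 * Real.pi - θ := by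
    have := Real.pi_pos; linarith
  -- RHS as a sum
  have hR : HasSum (fun n : ℕ => r^(n+1) * Real.sin (((n:ℝ)+1)*θ) / ((n:ℝ)+1)^2)
      ((Li2 ((r : ℂ) * Complex.exp ((θ : ℂ) * Complex.I))).im) := by
    have h := Complex.hasSum_im (li2_hasSum (hnorm θ))
    have heq : (fun n : ℕ =>
        ((((r:ℂ) * Complex.exp ((θ:ℂ) * Complex.I)) ^ (n+1) / ((n:ℂ)+1)^2).im))
        = fun n : ℕ => r^(n+1) * Real.sin (((n:ℝ)+1)*θ) / ((n:ℝ)+1)^2 := by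
      funext n
      rw [show ((n:ℂ)+1)^2 = (((((n:ℝ)+1)^2 : ℝ)):ℂ) by push_cast; ring,
        Complex.div_ofReal_im, (pow_re_im r θ n).2]
    rwa [heq] at h
  -- LHS as a sum
  set G : ℕ → ℝ → ℝ := fun n t => (-(r^(n+1)) / ((n:ℝ)+1)) * Real.cos (((n:ℝ)+1)*t) with hG
  have hGt : ∀ t : ℝ, HasSum (fun n => G n t)
      (Real.log ‖1 - (r:ℂ) * Complex.exp ((t:ℂ) * Complex.I)‖) := by
    intro t
    have h := Complex.hasSum_re ((neg_log_series (hnorm t)).neg)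
    rw [neg_neg, Complex.log_re] at h
    have heq : (fun n : ℕ =>
        (-(((r:ℂ) * Complex.exp ((t:ℂ) * Complex.I)) ^ (n+1) / ((n:ℂ)+1))).re)
        = fun n => G n t := by
      funext n
      rw [Complex.neg_re, show ((n:ℂ)+1) = (((((n:ℝ)+1) : ℝ)):ℂ) by push_cast; ring,
        Complex.div_ofReal_re, (pow_re_im r t n).1, hG]
      ring
    rwa [heq] at h
  rw [intervalIntegral.integral_congr (g := fun t => ∑' n, G n t)
    (fun t _ => ((hGt t).tsum_eq).symm), intervalIntegral.integral_of_le hle]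
  have hcont : ∀ n, Continuous (G n) := fun n =>
    continuous_const.mul (Real.continuous_cos.comp (continuous_const.mul continuous_id))
  have hint : ∀ n, Integrable (G n) (volume.restrict (Set.Ioc θ (2*Real.pi - θ))) :=
    fun n => (hcont n).integrableOn_Ioc
  have hbound : ∀ n : ℕ, ∀ t ∈ Set.Ioc θ (2*Real.pi - θ), ‖G n t‖ ≤ r^(n+1) := by
    intro n t _
    rw [hG]
    simp only [Real.norm_eq_abs, abs_mul, abs_div, abs_neg]
    rw [_root_.abs_of_nonneg (pow_nonneg hr0 (n+1)),
      _root_.abs_of_nonneg (by positivity : (0:ℝ) ≤ (n:ℝ)+1)]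
    have h1 : |Real.cos (((n:ℝ)+1)*t)| ≤ 1 := Real.abs_cos_le_one _
    have h2 : r^(n+1) / ((n:ℝ)+1) ≤ r^(n+1) :=
      div_le_self (by positivity) (by linarith [Nat.cast_nonneg (α := ℝ) n])
    calc r^(n+1) / ((n:ℝ)+1) * |Real.cos (((n:ℝ)+1)*t)|
        ≤ r^(n+1) * 1 := mul_le_mul h2 h1 (abs_nonneg _) (by positivity)
      _ = r^(n+1) := mul_one _
  have hsum : Summable fun n : ℕ =>
      ∫ t, ‖G n t‖ ∂(volume.restrict (Set.Ioc θ (2*Real.pi - θ))) := by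
    have hle2 : ∀ n : ℕ, (∫ t, ‖G n t‖ ∂(volume.restrict (Set.Ioc θ (2*Real.pi - θ))))
        ≤ (2*Real.pi - θ - θ) * r^(n+1) := by
      intro n
      have h := setIntegral_mono_on (hint n).norm
        (integrableOn_const measure_Ioc_lt_top.ne) measurableSet_Ioc (hbound n)
      rw [setIntegral_const, Real.volume_real_Ioc, smul_eq_mul,
        max_eq_left (by linarith)] at h
      exact h
    refine Summable.of_nonneg_of_le (fun n => integral_nonneg fun t => norm_nonneg _) hle2 ?_
    exact ((summable_geometric_of_lt_one hr0 hr1).mul_left ((2*Real.pi - θ - θ) * r)).congr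
      fun n => by ring
  have hswap := MeasureTheory.hasSum_integral_of_summable_integral_norm hint hsum
  have hval : (fun n : ℕ => ∫ t, G n t ∂(volume.restrict (Set.Ioc θ (2*Real.pi - θ))))
      = fun n : ℕ => 2 * (r^(n+1) * Real.sin (((n:ℝ)+1)*θ) / ((n:ℝ)+1)^2) := by
    funext n
    have hc : ((n:ℝ)+1) ≠ 0 := by positivity
    rw [show (∫ t, G n t ∂(volume.restrict (Set.Ioc θ (2*Real.pi - θ))))
        = ∫ t in θ..(2*Real.pi - θ), G n t from (intervalIntegral.integral_of_le hle).symm, hG]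
    rw [intervalIntegral.integral_const_mul, cos_integral _ hc,
      show ((n:ℝ)+1)*(2*Real.pi - θ) = ((n+1:ℕ):ℝ)*(2*Real.pi) - ((n:ℝ)+1)*θ by
        push_cast; ring,
      Real.sin_nat_mul_two_pi_sub]
    field_simp
    ring
  rw [hval] at hswap
  exact hswap.unique (hR.mul_left 2)
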